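/- Under the standing hypotheses (G is a finite simple C4-free graph, a, b : V(G) → ℕ satisfy a(x) ≥ 2 and b(x) ≥ 2 for all x, d_G(x) = a(x) + b(x) − 1 for every vertex x, and G has no feasible pair), let (A, B) ∈ 𝒫 and let u1 ~ u ~ v ~ v1 be a special path, i.e., u ∈ A*, v ∈ B*, u1 is an a-vertex in A adjacent to u, v1 is a b-vertex in B adjacent to v, and u is adjacent to v. Then either u1v ∈ E(G) or v1u ∈ E(G). -/

import Mathlib

open Finset
open scoped Classical

variable {V : Type*}

/-- `nbrIn G A x` is the number of neighbors of `x` lying in `A`, i.e. `d_A(x)`. -/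
noncomputable def nbrIn (G : SimpleGraph V) (A : Finset V) (x : V) : ℕ :=
  (A.filter fun y => G.Adj x y).card

/-- `G` contains no cycle of length four: there are no four distinct vertices
`w,x,y,z` with `wx, xy, yz, zw` all edges. -/
def C4Free (G : SimpleGraph V) : Prop :=
  ∀ w x y z : V, w ≠ x → w ≠ y → w ≠ z → x ≠ y → x ≠ z → y ≠ z →
    ¬(G.Adj w x ∧ G.Adj x y ∧ G.Adj y z ∧ G.Adj z w)

/-- `A` is `f`-good: every vertex of `A` has at least `f u` neighbors in `A`. -/
def IsGood (G : SimpleGraph V) (f : V → ℕ) (A : Finset V) : Prop :=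
  ∀ u ∈ A, f u ≤ nbrIn G A u

/-- `A` is `g`-degenerate: every non-empty subset `H ⊆ A` has a vertex `u`
with `d_H(u) ≤ g u`. -/
def IsDegenerate (G : SimpleGraph V) (g : V → ℤ) (A : Finset V) : Prop :=
  ∀ H ⊆ A, H.Nonempty → ∃ u ∈ H, (nbrIn G H u : ℤ) ≤ g u

/-- `(A,B)` is a partition of the vertex set: disjoint, non-empty, covering. -/
def IsPartition [Fintype V] (A B : Finset V) : Prop :=
  Disjoint A B ∧ A.Nonempty ∧ B.Nonempty ∧ A ∪ B = Finset.univ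

/-- `(A,B)` is a feasible pair: disjoint non-empty sets with `A` being `a`-good
and `B` being `b`-good. -/
def FeasiblePair (G : SimpleGraph V) (a b : V → ℕ) (A B : Finset V) : Prop :=
  Disjoint A B ∧ A.Nonempty ∧ B.Nonempty ∧ IsGood G a A ∧ IsGood G b B

/-- `(A,B)` is an `(a,b)`-partition: a partition with `A` being `(a-1)`-degenerate
and `B` being `(b-1)`-degenerate. -/
def ABPartition [Fintype V] (G : SimpleGraph V) (a b : V → ℕ) (A B : Finset V) : Prop :=
  IsPartition A B ∧ IsDegenerate G (fun x => (a x : ℤ) - 1) A ∧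
    IsDegenerate G (fun x => (b x : ℤ) - 1) B

/-- The number of edges of the subgraph of `G` induced on `A`. -/
noncomputable def edgesIn (G : SimpleGraph V) (A : Finset V) : ℕ :=
  ((A ×ˢ A).filter fun p => G.Adj p.1 p.2).card / 2

/-- The weight `w(A,B) = |E(G[A])| + |E(G[B])| + Σ_{x∈A} b(x) + Σ_{x∈B} a(x)`. -/
noncomputable def weight (G : SimpleGraph V) (a b : V → ℕ) (A B : Finset V) : ℕ :=
  edgesIn G A + edgesIn G B + ∑ x ∈ A, b x + ∑ x ∈ B, a x

/-- `(A,B)` belongs to `𝒫`: it is an `(a,b)`-partition of maximum weight among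
all `(a,b)`-partitions. -/
def MaxAB [Fintype V] (G : SimpleGraph V) (a b : V → ℕ) (A B : Finset V) : Prop :=
  ABPartition G a b A B ∧
    ∀ A' B' : Finset V, ABPartition G a b A' B' → weight G a b A' B' ≤ weight G a b A B

/-- `starSet G f A` is `A* = {x ∈ A : d_A(x) ≤ f(x) - 1}`. -/
noncomputable def starSet (G : SimpleGraph V) (f : V → ℕ) (A : Finset V) : Finset V :=
  A.filter fun x => nbrIn G A x < f x
section ClaimHelpers

variable (G : SimpleGraph V)

lemma nbrIn_mono {A B : Finset V} (h : A ⊆ B) (x : V) :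
    nbrIn G A x ≤ nbrIn G B x :=
  card_le_card (filter_subset_filter _ h)

lemma nbrIn_insert (A : Finset V) (x y : V) (hy : y ∉ A) :
    nbrIn G (insert y A) x = nbrIn G A x + if G.Adj x y then 1 else 0 := by
  unfold nbrIn
  rw [filter_insert]
  split_ifs with h
  · rw [card_insert_of_notMem (fun hmem => hy (mem_filter.1 hmem).1)]
  · rw [add_zero]

lemma nbrIn_insert_of_not_adj (A : Finset V) {x y : V} (h : ¬ G.Adj x y) :
    nbrIn G (insert y A) x = nbrIn G A x := by
  unfold nbrIn
  rw [filter_insert, if_neg h]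

lemma nbrIn_erase (A : Finset V) {x y : V} (hy : y ∈ A) (h : G.Adj x y) :
    nbrIn G (A.erase y) x + 1 = nbrIn G A x := by
  unfold nbrIn
  rw [filter_erase]
  exact card_erase_add_one (mem_filter.2 ⟨hy, h⟩)

lemma nbrIn_erase_of_not_adj (A : Finset V) {x y : V} (h : ¬ G.Adj x y) :
    nbrIn G (A.erase y) x = nbrIn G A x := by
  unfold nbrIn
  rw [filter_erase, erase_eq_of_notMem (fun hmem => h (mem_filter.1 hmem).2)]

lemma nbrIn_union_degree [Fintype V] {A B : Finset V}
    (hd : Disjoint A B) (hU : A ∪ B = Finset.univ) (x : V) :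
    nbrIn G A x + nbrIn G B x = G.degree x := by
  unfold nbrIn
  rw [← card_union_of_disjoint (disjoint_filter_filter hd), ← filter_union, hU]
  unfold SimpleGraph.degree
  congr 1
  ext y
  simp [SimpleGraph.mem_neighborFinset]

lemma sum_nbrIn (A : Finset V) :
    ((A ×ˢ A).filter fun p => G.Adj p.1 p.2).card = ∑ x ∈ A, nbrIn G A x := by
  rw [card_filter, Finset.sum_product]
  unfold nbrIn
  refine Finset.sum_congr rfl fun x _ => ?_
  rw [card_filter]

lemma edgesIn_insert {A : Finset V} {x : V} (hx : x ∉ A) :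
    edgesIn G (insert x A) = edgesIn G A + nbrIn G A x := by
  unfold edgesIn
  rw [sum_nbrIn, sum_nbrIn, Finset.sum_insert hx]
  have h1 : nbrIn G (insert x A) x = nbrIn G A x := by
    rw [nbrIn_insert G A x x hx, if_neg (G.loopless.irrefl x), add_zero]
  have h2 : ∑ y ∈ A, nbrIn G (insert x A) y
      = ∑ y ∈ A, nbrIn G A y + ∑ y ∈ A, (if G.Adj y x then 1 else 0) := by
    rw [← Finset.sum_add_distrib]
    exact Finset.sum_congr rfl fun y _ => nbrIn_insert G A y x hx
  have h3 : ∑ y ∈ A, (if G.Adj y x then 1 else 0) = nbrIn G A x := by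
    rw [← card_filter]
    unfold nbrIn
    congr 1
    ext y
    simp only [mem_filter]
    rw [G.adj_comm]
  rw [h1, h2, h3]
  omega

lemma edgesIn_erase {A : Finset V} {x : V} (hx : x ∈ A) :
    edgesIn G A = edgesIn G (A.erase x) + nbrIn G (A.erase x) x := by
  conv_lhs => rw [← insert_erase hx]
  exact edgesIn_insert G (notMem_erase x A)

lemma weight_comm (a b : V → ℕ) (A B : Finset V) :
    weight G a b A B = weight G b a B A := by
  unfold weight
  ring

lemma ABPartition_comm [Fintype V] {a b : V → ℕ} {A B : Finset V}
    (h : ABPartition G a b A B) : ABPartition G b a B A := by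
  obtain ⟨⟨hd, hA, hB, hU⟩, h1, h2⟩ := h
  exact ⟨⟨hd.symm, hB, hA, by rw [union_comm]; exact hU⟩, h2, h1⟩

lemma MaxAB_comm [Fintype V] {a b : V → ℕ} {A B : Finset V}
    (h : MaxAB G a b A B) : MaxAB G b a B A := by
  obtain ⟨hp, hm⟩ := h
  refine ⟨ABPartition_comm G hp, fun X Y hXY => ?_⟩
  rw [weight_comm G b a X Y, weight_comm G b a B A]
  exact hm Y X (ABPartition_comm G hXY)

lemma no_good_subset {f : V → ℕ} {A H : Finset V}
    (hdeg : IsDegenerate G (fun z => (f z : ℤ) - 1) A) (hH : H ⊆ A) (hne : H.Nonempty)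
    (hgood : IsGood G f H) : False := by
  obtain ⟨y, hy, hle⟩ := hdeg H hH hne
  have h1 := hgood y hy
  have h2 : (f y : ℤ) ≤ nbrIn G H y := by exact_mod_cast h1
  have hle' : (nbrIn G H y : ℤ) ≤ (f y : ℤ) - 1 := hle
  linarith

lemma move_lemma [Fintype V] (a b : V → ℕ)
    (hdeg : ∀ x : V, G.degree x + 1 = a x + b x)
    {A B : Finset V} (hAB : MaxAB G a b A B) {x : V} (hx : x ∈ A)
    (hdx : nbrIn G A x < a x) (hne : (A.erase x).Nonempty) :
    ∃ S, S ⊆ insert x B ∧ x ∈ S ∧ S.Nonempty ∧ IsGood G b S := by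
  obtain ⟨⟨⟨hdisj, hAne, hBne, hU⟩, hAdeg, hBdeg⟩, hmax⟩ := hAB
  have hxB : x ∉ B := disjoint_left.1 hdisj hx
  have hU' : A.erase x ∪ insert x B = Finset.univ := by
    rw [union_insert, ← insert_union, insert_erase hx, hU]
  have hdisj' : Disjoint (A.erase x) (insert x B) := by
    rw [disjoint_insert_right]
    exact ⟨notMem_erase _ _, disjoint_of_subset_left (erase_subset _ _) hdisj⟩
  have e1 : edgesIn G A = edgesIn G (A.erase x) + nbrIn G (A.erase x) x :=
    edgesIn_erase G hx
  have e1' : nbrIn G (A.erase x) x = nbrIn G A x :=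
    nbrIn_erase_of_not_adj G A (G.loopless.irrefl x)
  have e2 : edgesIn G (insert x B) = edgesIn G B + nbrIn G B x := edgesIn_insert G hxB
  have s1 : ∑ y ∈ A.erase x, b y + b x = ∑ y ∈ A, b y := sum_erase_add A b hx
  have s2 : ∑ y ∈ insert x B, a y = a x + ∑ y ∈ B, a y := sum_insert hxB
  have hdx2 : nbrIn G A x + nbrIn G B x = G.degree x := nbrIn_union_degree G hdisj hU x
  have hd := hdeg x
  have hnotdeg : ¬ IsDegenerate G (fun z => (b z : ℤ) - 1) (insert x B) := by
    intro hdegB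
    have hpart' : ABPartition G a b (A.erase x) (insert x B) :=
      ⟨⟨hdisj', hne, insert_nonempty _ _, hU'⟩,
       fun H hH hHne => hAdeg H (hH.trans (erase_subset _ _)) hHne, hdegB⟩
    have hle := hmax _ _ hpart'
    unfold weight at hle
    omega
  unfold IsDegenerate at hnotdeg
  push_neg at hnotdeg
  obtain ⟨H, hHsub, hHne, hHd⟩ := hnotdeg
  have hgood : IsGood G b H := by
    intro y hy
    have h1 := hHd y hy
    have h2 : (b y : ℤ) ≤ nbrIn G H y := by linarith
    exact_mod_cast h2
  have hxH : x ∈ H := by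
    by_contra hxH
    have hsubB : H ⊆ B := by
      intro z hz
      have h := hHsub hz
      rw [mem_insert] at h
      rcases h with rfl | h
      · exact absurd hz hxH
      · exact h
    exact no_good_subset G hBdeg hsubB hHne hgood
  exact ⟨H, hHsub, hxH, hHne, hgood⟩

end ClaimHelpers
/-- Claim 10: for any `(A,B) ∈ 𝒫` and any special path `u₁ ~ u ~ v ~ v₁` (with `u ∈ A*`,
`v ∈ B*`, `u₁` an `a`-vertex in `A`, `v₁` a `b`-vertex in `B`), either `u₁v ∈ E(G)` or
`v₁u ∈ E(G)`. -/
theorem special_path [Fintype V] (G : SimpleGraph V) (a b : V → ℕ)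
    (hC4 : C4Free G) (ha : ∀ x : V, 2 ≤ a x) (hb : ∀ x : V, 2 ≤ b x)
    (hdeg : ∀ x : V, G.degree x + 1 = a x + b x)
    (hnf : ¬ ∃ A B : Finset V, FeasiblePair G a b A B)
    (A B : Finset V) (hAB : MaxAB G a b A B)
    (u v u1 v1 : V)
    (hu : u ∈ starSet G a A) (hv : v ∈ starSet G b B)
    (hu1 : u1 ∈ A) (hu1deg : nbrIn G A u1 = a u1) (hu1u : G.Adj u1 u)
    (hv1 : v1 ∈ B) (hv1deg : nbrIn G B v1 = b v1) (hvv1 : G.Adj v v1)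
    (huv : G.Adj u v) :
    G.Adj u1 v ∨ G.Adj v1 u := by
  by_contra hcon
  push_neg at hcon
  obtain ⟨h1, h2⟩ := hcon
  obtain ⟨⟨⟨hdisj, hAne, hBne, hU⟩, hAdeg, hBdeg⟩, hmax⟩ := hAB
  rw [starSet, mem_filter] at hu hv
  obtain ⟨huA, hud⟩ := hu
  obtain ⟨hvB, hvd⟩ := hv
  have hvA : v ∉ A := disjoint_right.1 hdisj hvB
  have huB : u ∉ B := disjoint_left.1 hdisj huA
  have hv1A : v1 ∉ A := disjoint_right.1 hdisj hv1
  have hu1B : u1 ∉ B := disjoint_left.1 hdisj hu1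
  have hne_uv : u ≠ v := huv.ne
  have hne_u1v : u1 ≠ v := fun h => hvA (h ▸ hu1)
  have hne_u1v1 : u1 ≠ v1 := fun h => hv1A (h ▸ hu1)
  have hne_uv1 : u ≠ v1 := fun h => hv1A (h ▸ huA)
  have h3 : ¬ G.Adj v1 u1 := fun hadj =>
    hC4 u1 u v v1 hu1u.ne hne_u1v hne_u1v1 hne_uv hne_uv1 hvv1.ne
      ⟨hu1u, huv, hvv1, hadj⟩
  have h3' : ¬ G.Adj u1 v1 := fun h => h3 h.symm
  have hAB' : MaxAB G a b A B := ⟨⟨⟨hdisj, hAne, hBne, hU⟩, hAdeg, hBdeg⟩, hmax⟩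
  have hdeg' : ∀ x : V, G.degree x + 1 = b x + a x := fun x => by rw [hdeg x, Nat.add_comm]
  obtain ⟨S, hSsub, huS, hSne, hSgood⟩ :=
    move_lemma G a b hdeg hAB' huA hud ⟨u1, mem_erase.2 ⟨hu1u.ne, hu1⟩⟩
  obtain ⟨T, hTsub, hvT, hTne, hTgood⟩ :=
    move_lemma G b a hdeg' (MaxAB_comm G hAB') hvB hvd ⟨v1, mem_erase.2 ⟨hvv1.ne', hv1⟩⟩
  set A' := insert v (A.erase u) with hA'
  set B' := insert u (B.erase v) with hB'
  have hdegu := nbrIn_union_degree G hdisj hU u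
  have hdegv := nbrIn_union_degree G hdisj hU v
  have hddu := hdeg u
  have hddv := hdeg v
  -- A' is (a-1)-degenerate
  have hAdeg' : IsDegenerate G (fun z => (a z : ℤ) - 1) A' := by
    by_contra hnd
    unfold IsDegenerate at hnd
    push_neg at hnd
    obtain ⟨H, hHsub, hHne, hHd⟩ := hnd
    have hgoodH : IsGood G a H := by
      intro y hy
      have hq := hHd y hy
      have hq2 : (a y : ℤ) - 1 < (nbrIn G H y : ℤ) := hq
      have hq3 : (a y : ℤ) ≤ nbrIn G H y := by linarith
      exact_mod_cast hq3
    have huH : u ∉ H := by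
      intro huH
      have h := hHsub huH
      rw [hA', mem_insert] at h
      rcases h with h | h
      · exact hne_uv h
      · exact (mem_erase.1 h).1 rfl
    have hvH : v ∈ H := by
      by_contra hvH
      have hHA : H ⊆ A := by
        intro z hz
        have h := hHsub hz
        rw [hA', mem_insert] at h
        rcases h with rfl | h
        · exact absurd hz hvH
        · exact mem_of_mem_erase h
      exact no_good_subset G hAdeg hHA hHne hgoodH
    have hvS : v ∈ S := by
      by_contra hvS
      refine hnf ⟨H, S, ?_, hHne, hSne, hgoodH, hSgood⟩
      rw [disjoint_left]
      intro z hzH hzS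
      have hH' := hHsub hzH
      have hS' := hSsub hzS
      rw [hA', mem_insert] at hH'
      rw [mem_insert] at hS'
      rcases hH' with rfl | hH'
      · exact hvS hzS
      · rcases hS' with rfl | hS'
        · exact (mem_erase.1 hH').1 rfl
        · exact disjoint_left.1 hdisj (mem_of_mem_erase hH') hS'
    have hg := hSgood v hvS
    have hle1 : nbrIn G S v ≤ nbrIn G (insert u B) v := nbrIn_mono G hSsub v
    have e1 : nbrIn G (insert u B) v = nbrIn G B v + 1 := by
      rw [nbrIn_insert G B v u huB, if_pos huv.symm]
    have hg2 := hgoodH v hvH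
    have hle2 : nbrIn G H v ≤ nbrIn G A' v := nbrIn_mono G hHsub v
    have e2 : nbrIn G A' v = nbrIn G (A.erase u) v := by
      rw [hA']; exact nbrIn_insert_of_not_adj G _ (G.loopless.irrefl v)
    have e3 : nbrIn G (A.erase u) v + 1 = nbrIn G A v := nbrIn_erase G A huA huv.symm
    omega
  -- B' is (b-1)-degenerate
  have hBdeg' : IsDegenerate G (fun z => (b z : ℤ) - 1) B' := by
    by_contra hnd
    unfold IsDegenerate at hnd
    push_neg at hnd
    obtain ⟨H, hHsub, hHne, hHd⟩ := hnd
    have hgoodH : IsGood G b H := by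
      intro y hy
      have hq := hHd y hy
      have hq2 : (b y : ℤ) - 1 < (nbrIn G H y : ℤ) := hq
      have hq3 : (b y : ℤ) ≤ nbrIn G H y := by linarith
      exact_mod_cast hq3
    have hvH : v ∉ H := by
      intro hvH
      have h := hHsub hvH
      rw [hB', mem_insert] at h
      rcases h with h | h
      · exact hne_uv h.symm
      · exact (mem_erase.1 h).1 rfl
    have huH : u ∈ H := by
      by_contra huH
      have hHB : H ⊆ B := by
        intro z hz
        have h := hHsub hz
        rw [hB', mem_insert] at h
        rcases h with rfl | h
        · exact absurd hz huH
        · exact mem_of_mem_erase h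
      exact no_good_subset G hBdeg hHB hHne hgoodH
    have huT : u ∈ T := by
      by_contra huT
      refine hnf ⟨T, H, ?_, hTne, hHne, hTgood, hgoodH⟩
      rw [disjoint_left]
      intro z hzT hzH
      have hT' := hTsub hzT
      have hH' := hHsub hzH
      rw [mem_insert] at hT'
      rw [hB', mem_insert] at hH'
      rcases hH' with rfl | hH'
      · exact huT hzT
      · rcases hT' with rfl | hT'
        · exact (mem_erase.1 hH').1 rfl
        · exact disjoint_left.1 hdisj hT' (mem_of_mem_erase hH')
    have hg := hTgood u huT
    have hle1 : nbrIn G T u ≤ nbrIn G (insert v A) u := nbrIn_mono G hTsub u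
    have e1 : nbrIn G (insert v A) u = nbrIn G A u + 1 := by
      rw [nbrIn_insert G A u v hvA, if_pos huv]
    have hg2 := hgoodH u huH
    have hle2 : nbrIn G H u ≤ nbrIn G B' u := nbrIn_mono G hHsub u
    have e2 : nbrIn G B' u = nbrIn G (B.erase v) u := by
      rw [hB']; exact nbrIn_insert_of_not_adj G _ (G.loopless.irrefl u)
    have e3 : nbrIn G (B.erase v) u + 1 = nbrIn G B u := nbrIn_erase G B hvB huv
    omega
  -- (A', B') is a partition
  have hdisj' : Disjoint A' B' := by
    rw [disjoint_left]
    intro z hz hz'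
    rw [hA'] at hz
    rw [hB'] at hz'
    simp only [mem_insert, mem_erase] at hz hz'
    rcases hz with rfl | ⟨hz1, hz2⟩
    · rcases hz' with h | h
      · exact hne_uv h.symm
      · exact h.1 rfl
    · rcases hz' with rfl | h
      · exact hz1 rfl
      · exact disjoint_left.1 hdisj hz2 h.2
  have hU' : A' ∪ B' = Finset.univ := by
    ext z
    simp only [hA', hB', mem_union, mem_insert, mem_erase, mem_univ, iff_true]
    have hz : z ∈ A ∪ B := by rw [hU]; exact mem_univ z
    rw [mem_union] at hz
    by_cases hzu : z = u
    · exact Or.inr (Or.inl hzu)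
    by_cases hzv : z = v
    · exact Or.inl (Or.inl hzv)
    rcases hz with h | h
    · exact Or.inl (Or.inr ⟨hzu, h⟩)
    · exact Or.inr (Or.inr ⟨hzv, h⟩)
  have hpart' : ABPartition G a b A' B' :=
    ⟨⟨hdisj', insert_nonempty _ _, insert_nonempty _ _, hU'⟩, hAdeg', hBdeg'⟩
  -- the weight does not decrease
  have hwge : weight G a b A B ≤ weight G a b A' B' := by
    have hvA0 : v ∉ A.erase u := fun h => hvA (mem_of_mem_erase h)
    have huB0 : u ∉ B.erase v := fun h => huB (mem_of_mem_erase h)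
    have e1 : edgesIn G A = edgesIn G (A.erase u) + nbrIn G (A.erase u) u :=
      edgesIn_erase G huA
    have e1' : nbrIn G (A.erase u) u = nbrIn G A u :=
      nbrIn_erase_of_not_adj G A (G.loopless.irrefl u)
    have e2 : edgesIn G A' = edgesIn G (A.erase u) + nbrIn G (A.erase u) v :=
      edgesIn_insert G hvA0
    have e3 : nbrIn G (A.erase u) v + 1 = nbrIn G A v := nbrIn_erase G A huA huv.symm
    have f1 : edgesIn G B = edgesIn G (B.erase v) + nbrIn G (B.erase v) v :=
      edgesIn_erase G hvB
    have f1' : nbrIn G (B.erase v) v = nbrIn G B v :=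
      nbrIn_erase_of_not_adj G B (G.loopless.irrefl v)
    have f2 : edgesIn G B' = edgesIn G (B.erase v) + nbrIn G (B.erase v) u :=
      edgesIn_insert G huB0
    have f3 : nbrIn G (B.erase v) u + 1 = nbrIn G B u := nbrIn_erase G B hvB huv
    have s1 : ∑ y ∈ A.erase u, b y + b u = ∑ y ∈ A, b y := sum_erase_add A b huA
    have s2 : ∑ y ∈ A', b y = b v + ∑ y ∈ A.erase u, b y := sum_insert hvA0
    have s3 : ∑ y ∈ B.erase v, a y + a v = ∑ y ∈ B, a y := sum_erase_add B a hvB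
    have s4 : ∑ y ∈ B', a y = a u + ∑ y ∈ B.erase v, a y := sum_insert huB0
    unfold weight
    omega
  have hmax' : MaxAB G a b A' B' :=
    ⟨hpart', fun X Y hXY => le_trans (hmax X Y hXY) hwge⟩
  -- second stage: move u1 out of A' and v1 out of B'
  have hA'u1 : u1 ∈ A' := mem_insert_of_mem (mem_erase.2 ⟨hu1u.ne, hu1⟩)
  have hd_u1 : nbrIn G A' u1 < a u1 := by
    have e1 : nbrIn G A' u1 = nbrIn G (A.erase u) u1 := by
      rw [hA']; exact nbrIn_insert_of_not_adj G _ h1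
    have e2 : nbrIn G (A.erase u) u1 + 1 = nbrIn G A u1 := nbrIn_erase G A huA hu1u
    have := ha u1
    omega
  obtain ⟨S1, hS1sub, hu1S1, hS1ne, hS1good⟩ :=
    move_lemma G a b hdeg hmax' hA'u1 hd_u1
      ⟨v, mem_erase.2 ⟨Ne.symm hne_u1v, mem_insert_self v _⟩⟩
  have hB'v1 : v1 ∈ B' := mem_insert_of_mem (mem_erase.2 ⟨hvv1.ne', hv1⟩)
  have hd_v1 : nbrIn G B' v1 < b v1 := by
    have e1 : nbrIn G B' v1 = nbrIn G (B.erase v) v1 := by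
      rw [hB']; exact nbrIn_insert_of_not_adj G _ h2
    have e2 : nbrIn G (B.erase v) v1 + 1 = nbrIn G B v1 := nbrIn_erase G B hvB hvv1.symm
    have := hb v1
    omega
  obtain ⟨T1, hT1sub, hv1T1, hT1ne, hT1good⟩ :=
    move_lemma G b a hdeg' (MaxAB_comm G hmax') hB'v1 hd_v1
      ⟨u, mem_erase.2 ⟨hne_uv1, mem_insert_self u _⟩⟩
  -- final contradiction
  by_cases hdST : Disjoint T1 S1
  · exact hnf ⟨T1, S1, hdST, hT1ne, hS1ne, hT1good, hS1good⟩
  obtain ⟨z, hzT1, hzS1⟩ := not_disjoint_iff.1 hdST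
  have hz1 := hS1sub hzS1
  have hz2 := hT1sub hzT1
  rw [hB'] at hz1
  rw [hA'] at hz2
  simp only [mem_insert, mem_erase] at hz1 hz2
  have hcase : u1 ∈ T1 ∨ v1 ∈ S1 := by
    rcases hz1 with rfl | rfl | ⟨hzv, hzB⟩
    · exact Or.inl hzT1
    · rcases hz2 with h | h | h
      · exact absurd h hne_uv1
      · exact absurd h hne_uv
      · exact absurd rfl h.1
    · rcases hz2 with rfl | rfl | h
      · exact Or.inr hzS1
      · exact absurd rfl hzv
      · exact absurd h.2 (disjoint_right.1 hdisj hzB)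
  rcases hcase with hmem | hmem
  · have hg := hT1good u1 hmem
    have hle1 : nbrIn G T1 u1 ≤ nbrIn G (insert v1 A') u1 := nbrIn_mono G hT1sub u1
    have e0 : nbrIn G (insert v1 A') u1 = nbrIn G A' u1 := nbrIn_insert_of_not_adj G _ h3'
    have e1 : nbrIn G A' u1 = nbrIn G (A.erase u) u1 := by
      rw [hA']; exact nbrIn_insert_of_not_adj G _ h1
    have e2 : nbrIn G (A.erase u) u1 + 1 = nbrIn G A u1 := nbrIn_erase G A huA hu1u
    omega
  · have hg := hS1good v1 hmem
    have hle1 : nbrIn G S1 v1 ≤ nbrIn G (insert u1 B') v1 := nbrIn_mono G hS1sub v1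
    have e0 : nbrIn G (insert u1 B') v1 = nbrIn G B' v1 := nbrIn_insert_of_not_adj G _ h3
    have e1 : nbrIn G B' v1 = nbrIn G (B.erase v) v1 := by
      rw [hB']; exact nbrIn_insert_of_not_adj G _ h2
    have e2 : nbrIn G (B.erase v) v1 + 1 = nbrIn G B v1 := nbrIn_erase G B hvB hvv1.symm
    omega
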